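/- For all real k > 0, 1/(2^{1/k} − 1) − k/ln 2 + 1/2 > 0. -/

import Mathlib

lemma phi_aux_key (x : ℝ) (hx : 0 < x) :
    2 * (Real.exp x - 1) < x * (Real.exp x + 1) := by
  set g : ℝ → ℝ := fun t => t * Real.exp t + t - 2 * Real.exp t + 2 with hgdef
  have hg : ∀ y : ℝ, HasDerivAt g ((y - 1) * Real.exp y + 1) y := by
    intro y
    have h := ((((hasDerivAt_id y).mul (Real.hasDerivAt_exp y)).add
      (hasDerivAt_id y)).sub ((Real.hasDerivAt_exp y).const_mul 2)).add_const 2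
    refine h.congr_deriv ?_
    simp [id]
    ring
  have hpos : ∀ y ∈ Set.Ioi (0:ℝ), 0 < (y - 1) * Real.exp y + 1 := by
    intro y hy
    simp only [Set.mem_Ioi] at hy
    have h1 : Real.exp (-y) * Real.exp y = 1 := by
      rw [← Real.exp_add]; simp
    have h2 : -y + 1 < Real.exp (-y) := Real.add_one_lt_exp (by linarith)
    nlinarith [Real.exp_pos y, Real.exp_pos (-y)]
  have hcont : ContinuousOn g (Set.Ici 0) := by
    apply Continuous.continuousOn; fun_prop
  have hmono : StrictMonoOn g (Set.Ici 0) := by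
    apply strictMonoOn_of_deriv_pos (convex_Ici 0) hcont
    intro y hy
    rw [interior_Ici] at hy
    rw [(hg y).deriv]
    exact hpos y hy
  have h0 : g 0 < g x := hmono (Set.self_mem_Ici) (Set.mem_Ici.mpr hx.le) hx
  simp only [hgdef, zero_mul, Real.exp_zero, mul_one] at h0
  nlinarith [h0]

theorem phi_aux_pos (k : ℝ) (hk : 0 < k) :
    1 / ((2 : ℝ) ^ (1 / k) - 1) - k / Real.log 2 + 1 / 2 > 0 := by
  have hlog : 0 < Real.log 2 := Real.log_pos one_lt_two
  set x := Real.log 2 / k with hxdef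
  have hx : 0 < x := div_pos hlog hk
  have h2 : (2 : ℝ) ^ (1 / k : ℝ) = Real.exp x := by
    rw [Real.rpow_def_of_pos (by norm_num : (0:ℝ) < 2), hxdef, mul_one_div]
  have hk2 : k / Real.log 2 = 1 / x := by
    rw [hxdef, one_div_div]
  have h1 : 1 < Real.exp x := by
    have := Real.add_one_lt_exp (ne_of_gt hx); linarith
  have hden : 0 < Real.exp x - 1 := by linarith
  have hkey := phi_aux_key x hx
  rw [h2, hk2]
  have : 1 / x < 1 / (Real.exp x - 1) + 1 / 2 := by
    rw [div_add_div _ _ (ne_of_gt hden) two_ne_zero, div_lt_div_iff₀ hx (by positivity)]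
    nlinarith
  linarith
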